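/- Let L₁, …, L_{κ−1} be a complete set of κ − 1 mutually projective Latin squares of order κ and let c₁ ≠ c₂ be two column indices. Then for every ordered pair (x, y) of distinct symbols there exist exactly one index s (1 ≤ s ≤ κ−1) and exactly one row r such that L_s(r, c₁) = x and L_s(r, c₂) = y; in particular all κ(κ−1) ordered pairs of distinct symbols occur exactly once among the κ(κ−1) rows at columns c₁ and c₂. -/
import Mathlib


/-- A Latin square of order κ: each symbol occurs exactly once in every row and
exactly once in every column. -/
def IsLatinSquare {κ : ℕ} (L : Fin κ → Fin κ → Fin κ) : Prop :=
  (∀ i : Fin κ, Function.Bijective fun c => L i c) ∧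
  (∀ c : Fin κ, Function.Bijective fun i => L i c)

/-- Two Latin squares are projective if for every row index `i` of the first and
every row index `j` of the second there is exactly one column where they agree. -/
def ProjectivePair {κ : ℕ} (L₁ L₂ : Fin κ → Fin κ → Fin κ) : Prop :=
  ∀ i j : Fin κ, ∃! c : Fin κ, L₁ i c = L₂ j c

/-- Given a complete set of κ − 1 mutually projective Latin squares of order κ and two
distinct column indices c₁, c₂, every ordered pair (x, y) of distinct symbols occurs in
columns c₁, c₂ of exactly one row of exactly one square of the set. -/
theorem mpls_pairs_in_two_columns {κ : ℕ} (hκ : 2 ≤ κ)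
    (Ls : Fin (κ - 1) → (Fin κ → Fin κ → Fin κ))
    (hinj : Function.Injective Ls)
    (hlatin : ∀ s, IsLatinSquare (Ls s))
    (hdiag : ∀ s, ∀ i : Fin κ, Ls s i i = ⟨1, by omega⟩)
    (hproj : ∀ s t, s ≠ t → ProjectivePair (Ls s) (Ls t))
    (c₁ c₂ : Fin κ) (hc : c₁ ≠ c₂) :
    ∀ x y : Fin κ, x ≠ y →
      ∃! sr : Fin (κ - 1) × Fin κ, Ls sr.1 sr.2 c₁ = x ∧ Ls sr.1 sr.2 c₂ = y := by
  intro x y hxy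
  set F : Fin (κ - 1) × Fin κ → {p : Fin κ × Fin κ // p.1 ≠ p.2} :=
    fun sr => ⟨(Ls sr.1 sr.2 c₁, Ls sr.1 sr.2 c₂),
      fun h => hc ((hlatin sr.1).1 sr.2 |>.1 h)⟩ with hF
  have hFinj : Function.Injective F := by
    rintro ⟨s, r⟩ ⟨t, r'⟩ h
    have h1 : Ls s r c₁ = Ls t r' c₁ := congrArg (fun q => q.1.1) h
    have h2 : Ls s r c₂ = Ls t r' c₂ := congrArg (fun q => q.1.2) h
    by_cases hst : s = t
    · subst hst
      have : r = r' := (hlatin s).2 c₁ |>.1 h1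
      simp [this]
    · exact absurd ((hproj s t hst r r').unique h1 h2) hc
  have hcard : Fintype.card (Fin (κ - 1) × Fin κ)
      = Fintype.card {p : Fin κ × Fin κ // p.1 ≠ p.2} := by
    have hdiagcard : Fintype.card {p : Fin κ × Fin κ // p.1 = p.2} = κ := by
      rw [Fintype.card_congr
        (⟨fun p => p.1.1, fun i => ⟨(i, i), rfl⟩,
          fun p => by rcases p with ⟨⟨a, b⟩, h⟩; cases h; rfl,
          fun i => rfl⟩ : {p : Fin κ × Fin κ // p.1 = p.2} ≃ Fin κ)]
      simp
    have : Fintype.card {p : Fin κ × Fin κ // ¬ p.1 = p.2}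
        = Fintype.card (Fin κ × Fin κ) - Fintype.card {p : Fin κ × Fin κ // p.1 = p.2} :=
      Fintype.card_subtype_compl _
    simp only [hdiagcard, Fintype.card_prod, Fintype.card_fin] at this ⊢
    rw [this, Nat.sub_mul, one_mul]
  have hFbij : Function.Bijective F :=
    (Fintype.bijective_iff_injective_and_card F).2 ⟨hFinj, hcard⟩
  obtain ⟨sr, hsr⟩ := hFbij.surjective ⟨(x, y), hxy⟩
  refine ⟨sr, ⟨?_, ?_⟩, ?_⟩
  · exact congrArg (fun q => q.1.1) hsr
  · exact congrArg (fun q => q.1.2) hsr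
  · intro sr' h'
    apply hFinj
    rw [hsr]
    exact Subtype.ext (Prod.ext h'.1 h'.2)
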